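/- Let f and g be continuously differentiable and let (x̄,ȳ) satisfy g(x̄,ȳ) ≤ 0 and f(x̄,ȳ) ≤ f(x̄,y) for all y with g(x̄,y) ≤ 0 (i.e., ȳ ∈ S(x̄)). Set I² := {i : g_i(x̄,ȳ) = 0}, and let v₀ ≥ 0 and v_i ≥ 0 for i ∈ I² satisfy v₀ + Σ_{i∈I²} v_i = 1 and v₀∇_y f(x̄,ȳ) + Σ_{i∈I²} v_i∇_y g_i(x̄,ȳ) = 0. Then there is no d = (d¹,d²) ∈ ℝⁿ×ℝᵐ such that ∇g_j(x̄,ȳ)ᵀd < 0 for every j ∈ I² and v₀∇_y f(x̄,ȳ)ᵀd² − Σ_{i∈I²} v_i∇_x g_i(x̄,ȳ)ᵀd¹ < 0. In particular, the extended Mangasarian–Fromowitz constraint qualification for the GSIP form of (LLVFR) fails at every feasible point of (LLVFR). -/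

import Mathlib

/-- `Vec k` is the Euclidean space `ℝ^k`. -/
abbrev Vec (k : ℕ) := Fin k → ℝ

/-- The extended Mangasarian–Fromowitz constraint qualification for
the GSIP form of (LLVFR) fails: given `ȳ ∈ S(x̄)` and Fritz-John multipliers
`(v₀, v)` of the lower-level problem (supported on the active set `I²`), there is no
direction `d = (d¹,d²)` with `∇g_j(x̄,ȳ)ᵀd < 0` for all `j ∈ I²` and
`v₀∇_y f(x̄,ȳ)ᵀd² − Σ_{i∈I²} v_i ∇_x g_i(x̄,ȳ)ᵀd¹ < 0`. -/
theorem stmt_15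
    {n m q : ℕ} (hn : 0 < n) (hm : 0 < m) (hq : 0 < q)
    (f : Vec n → Vec m → ℝ) (g : Vec n → Vec m → Vec q)
    (hf : ContDiff ℝ 1 (fun pq : Vec n × Vec m => f pq.1 pq.2))
    (hg : ContDiff ℝ 1 (fun pq : Vec n × Vec m => g pq.1 pq.2))
    (xb : Vec n) (yb : Vec m)
    -- ȳ ∈ S(x̄)
    (hfeas : ∀ i, g xb yb i ≤ 0)
    (hmin : ∀ y, (∀ i, g xb y i ≤ 0) → f xb yb ≤ f xb y)
    -- Fritz-John multipliers supported on the active index set I²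
    (v0 : ℝ) (v : Vec q)
    (hv0 : 0 ≤ v0)
    (hv : ∀ i, g xb yb i = 0 → 0 ≤ v i)
    (hvsupp : ∀ i, g xb yb i ≠ 0 → v i = 0)
    (hsum : v0 + ∑ i, v i = 1)
    (heq : v0 • fderiv ℝ (f xb) yb
      + ∑ i, v i • fderiv ℝ (fun y => g xb y i) yb = 0) :
    ¬ ∃ d : Vec n × Vec m,
      (∀ j, g xb yb j = 0 →
        fderiv ℝ (fun pq : Vec n × Vec m => g pq.1 pq.2 j) (xb, yb) d < 0) ∧
      v0 * fderiv ℝ (f xb) yb d.2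
        - ∑ i, v i * fderiv ℝ (fun x => g x yb i) xb d.1 < 0 := by
  rintro ⟨d, hd1, hd2⟩
  -- differentiability of each component of g
  have hgj : ∀ j, DifferentiableAt ℝ (fun pq : Vec n × Vec m => g pq.1 pq.2 j) (xb, yb) := by
    intro j
    exact ((contDiff_pi.mp hg j).differentiable one_ne_zero).differentiableAt
  -- partial derivatives sum to the total derivative
  have hsplit : ∀ j,
      fderiv ℝ (fun x => g x yb j) xb d.1 + fderiv ℝ (fun y => g xb y j) yb d.2
        = fderiv ℝ (fun pq : Vec n × Vec m => g pq.1 pq.2 j) (xb, yb) d := by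
    intro j
    set L := fderiv ℝ (fun pq : Vec n × Vec m => g pq.1 pq.2 j) (xb, yb) with hL
    have hx : HasFDerivAt (fun x : Vec n => g x yb j)
        (L.comp (ContinuousLinearMap.inl ℝ (Vec n) (Vec m))) xb :=
      ((hgj j).hasFDerivAt).comp (f := fun x : Vec n => (x, yb)) xb (hasFDerivAt_prodMk_left xb yb)
    have hy : HasFDerivAt (fun y : Vec m => g xb y j)
        (L.comp (ContinuousLinearMap.inr ℝ (Vec n) (Vec m))) yb :=
      ((hgj j).hasFDerivAt).comp (f := fun y : Vec m => (xb, y)) yb (hasFDerivAt_prodMk_right xb yb)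
    rw [hx.fderiv, hy.fderiv]
    simp only [ContinuousLinearMap.coe_comp', Function.comp_apply,
      ContinuousLinearMap.inl_apply, ContinuousLinearMap.inr_apply]
    rw [← map_add]
    congr 1
    exact Prod.ext (by simp) (by simp)
  -- evaluate heq at d.2
  have heval : v0 * fderiv ℝ (f xb) yb d.2
      + ∑ i, v i * fderiv ℝ (fun y => g xb y i) yb d.2 = 0 := by
    have := congrArg (fun L : Vec m →L[ℝ] ℝ => L d.2) heq
    simpa [ContinuousLinearMap.add_apply, ContinuousLinearMap.sum_apply,
      ContinuousLinearMap.smul_apply, smul_eq_mul] using this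
  -- rewrite the second expression
  have hrew : v0 * fderiv ℝ (f xb) yb d.2
      - ∑ i, v i * fderiv ℝ (fun x => g x yb i) xb d.1
      = - ∑ i, v i * fderiv ℝ (fun pq : Vec n × Vec m => g pq.1 pq.2 i) (xb, yb) d := by
    have h1 : v0 * fderiv ℝ (f xb) yb d.2
        = - ∑ i, v i * fderiv ℝ (fun y => g xb y i) yb d.2 := by linarith
    rw [h1, sub_eq_add_neg, ← neg_add, neg_inj, ← Finset.sum_add_distrib]
    apply Finset.sum_congr rfl
    intro i _
    rw [← hsplit i]
    ring
  -- each term of the sum is nonpositive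
  have hterm : ∀ i, v i * fderiv ℝ (fun pq : Vec n × Vec m => g pq.1 pq.2 i) (xb, yb) d ≤ 0 := by
    intro i
    by_cases h : g xb yb i = 0
    · exact mul_nonpos_of_nonneg_of_nonpos (hv i h) (hd1 i h).le
    · rw [hvsupp i h]; simp
  have : ∑ i, v i * fderiv ℝ (fun pq : Vec n × Vec m => g pq.1 pq.2 i) (xb, yb) d ≤ 0 :=
    Finset.sum_nonpos fun i _ => hterm i
  rw [hrew] at hd2
  linarith
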